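/- Suppose the feasible set F of the semi-infinite program has nonempty interior. Suppose (y₁*, …, y_M*) ∈ N^M attains the supremum of Φ over N^M, and λ* ∈ F(y₁*, …, y_M*) minimizes ψ over F(y₁*, …, y_M*). Then the function V : ℝⁿ → ℝ defined by V(z) = Σ_{i=1}^M λ*_i φ_i(z) satisfies V(0) = 0, V(y) > 0 for every y ∈ N \ {0}, and ⟨∇V(y), f(y)⟩ ≤ 0 for every y ∈ N; consequently the origin is Lyapunov stable for the system ẋ = f(x). -/

import Mathlib

/-- A function `α : [0,∞) → [0,∞)` is of class K if it is continuous,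
strictly increasing, and `α 0 = 0`. -/
def IsClassK (α : ℝ → ℝ) : Prop :=
  ContinuousOn α (Set.Ici 0) ∧ StrictMonoOn α (Set.Ici 0) ∧ α 0 = 0 ∧
    ∀ x ∈ Set.Ici (0 : ℝ), 0 ≤ α x

/-- The origin is Lyapunov stable for `ẋ = f(x)`. -/
def LyapunovStable (n : ℕ) (f : EuclideanSpace ℝ (Fin n) → EuclideanSpace ℝ (Fin n)) : Prop :=
  ∀ ε > (0 : ℝ), ∃ δ > (0 : ℝ), ∀ x : ℝ → EuclideanSpace ℝ (Fin n),
    (∀ t, 0 ≤ t → HasDerivAt x (f (x t)) t) → ‖x 0‖ < δ →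
      ∀ t, 0 ≤ t → ‖x t‖ < ε


open Set Metric Finset

section AuxLemmas

private lemma min_exists' {M : ℕ} (ψ : EuclideanSpace ℝ (Fin M) → ℝ)
    (hψcont : Continuous ψ)
    (hψcoercive : ∀ C : ℝ, ∃ R : ℝ, ∀ l, R ≤ ‖l‖ → C ≤ ψ l)
    (S : Set (EuclideanSpace ℝ (Fin M))) (hS : IsClosed S) (hne : S.Nonempty) :
    ∃ μ ∈ S, ∀ l ∈ S, ψ μ ≤ ψ l := by
  obtain ⟨b, hb⟩ := hne
  obtain ⟨R, hR⟩ := hψcoercive (ψ b + 1)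
  set R' := max R ‖b‖ with hR'
  have hbK : b ∈ S ∩ closedBall 0 R' := ⟨hb, by simp [hR', le_max_right]⟩
  have hK : IsCompact (S ∩ closedBall 0 R') :=
    (isCompact_closedBall _ _).inter_left hS
  obtain ⟨μ, hμ, hmin⟩ := hK.exists_isMinOn ⟨b, hbK⟩ hψcont.continuousOn
  refine ⟨μ, hμ.1, fun l hl => ?_⟩
  by_cases h : ‖l‖ ≤ R'
  · exact hmin ⟨hl, by simpa [dist_eq_norm] using h⟩
  · have h1 : ψ b + 1 ≤ ψ l := hR l (le_trans (le_max_left _ _) (le_of_not_ge h))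
    have h2 : ψ μ ≤ ψ b := hmin hbK
    linarith

private lemma csInf_image_min' {X : Type*} (ψ : X → ℝ) (S : Set X) (μ : X) (hμ : μ ∈ S)
    (hmin : ∀ l ∈ S, ψ μ ≤ ψ l) : sInf (ψ '' S) = ψ μ := by
  apply le_antisymm
  · exact csInf_le ⟨ψ μ, by rintro _ ⟨l, hl, rfl⟩; exact hmin l hl⟩ ⟨μ, hμ, rfl⟩
  · exact le_csInf ⟨ψ μ, μ, hμ, rfl⟩ (by rintro _ ⟨l, hl, rfl⟩; exact hmin l hl)

private lemma lin_map' {M : ℕ} (c : Fin M → ℝ) :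
    IsLinearMap ℝ (fun l : EuclideanSpace ℝ (Fin M) => ∑ i, l i * c i) := by
  constructor
  · intro x y; simp [add_mul, Finset.sum_add_distrib]
  · intro a x; simp [Finset.mul_sum, mul_assoc]

private lemma lin_cont' {M : ℕ} (c : Fin M → ℝ) :
    Continuous (fun l : EuclideanSpace ℝ (Fin M) => ∑ i, l i * c i) :=
  continuous_finset_sum _ fun i _ => (PiLp.continuous_apply 2 _ i).mul continuous_const

private lemma key_feas' {n M : ℕ} (hM : 1 ≤ M)
    (N : Set (EuclideanSpace ℝ (Fin n)))
    (C : EuclideanSpace ℝ (Fin n) → Set (EuclideanSpace ℝ (Fin M)))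
    (hCclosed : ∀ y, IsClosed (C y)) (hCconvex : ∀ y, Convex ℝ (C y))
    (ψ : EuclideanSpace ℝ (Fin M) → ℝ) (hψcont : Continuous ψ)
    (hψstrict : StrictConvexOn ℝ Set.univ ψ)
    (hψcoercive : ∀ Cs : ℝ, ∃ R : ℝ, ∀ l, R ≤ ‖l‖ → Cs ≤ ψ l)
    (lbar : EuclideanSpace ℝ (Fin M)) (hlbar : ∀ y ∈ N, lbar ∈ C y)
    (ystar : Fin M → EuclideanSpace ℝ (Fin n)) (hystarN : ∀ k, ystar k ∈ N)
    (lstar : EuclideanSpace ℝ (Fin M))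
    (hlstarFeas : ∀ k, lstar ∈ C (ystar k))
    (hlstarMin : ∀ l, (∀ k, l ∈ C (ystar k)) → ψ lstar ≤ ψ l)
    (hmax : ∀ ys : Fin M → EuclideanSpace ℝ (Fin n), (∀ k, ys k ∈ N) →
      ∀ μ, (∀ k, μ ∈ C (ys k)) → (∀ l, (∀ k, l ∈ C (ys k)) → ψ μ ≤ ψ l) → ψ μ ≤ ψ lstar) :
    ∀ y ∈ N, lstar ∈ C y := by
  by_contra hcon
  push_neg at hcon
  obtain ⟨y0, hy0N, hy0⟩ := hcon
  obtain ⟨R₀, hR₀⟩ := hψcoercive (ψ lstar + 1)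
  set R : ℝ := max R₀ (max ‖lbar‖ ‖lstar‖) with hRdef
  have hlbarR : ‖lbar‖ ≤ R := le_trans (le_max_left _ _) (le_max_right _ _)
  have hlstarR : ‖lstar‖ ≤ R := le_trans (le_max_right _ _) (le_max_right _ _)
  have hsmall : ∀ l : EuclideanSpace ℝ (Fin M), ψ l ≤ ψ lstar → ‖l‖ ≤ R := by
    intro l hl
    by_contra h
    have : ψ lstar + 1 ≤ ψ l := hR₀ l (le_trans (le_max_left _ _) (le_of_not_ge h))
    linarith
  set ι := Option {y : EuclideanSpace ℝ (Fin n) // y ∈ N} with hι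
  set K : ι → Set (EuclideanSpace ℝ (Fin M)) := fun o =>
    (Option.elim o {l | ψ l ≤ ψ lstar} (fun y => C y.1)) ∩ closedBall 0 R with hK
  have hKconv : ∀ i, Convex ℝ (K i) := by
    rintro (_ | y)
    · refine Convex.inter ?_ (convex_closedBall _ _)
      have := hψstrict.convexOn.convex_le (ψ lstar)
      simpa using this
    · exact (hCconvex y.1).inter (convex_closedBall _ _)
  have hKcomp : ∀ i, IsCompact (K i) := by
    rintro (_ | y)
    · exact (isCompact_closedBall _ _).inter_left
        (isClosed_le hψcont continuous_const)
    · exact (isCompact_closedBall _ _).inter_left (hCclosed y.1)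
  have hempty : (⋂ i, K i) = ∅ := by
    rw [Set.eq_empty_iff_forall_notMem]
    intro μ hμ
    have hμnone : ψ μ ≤ ψ lstar := (Set.mem_iInter.mp hμ none).1
    have hμC : ∀ y ∈ N, μ ∈ C y := fun y hy => (Set.mem_iInter.mp hμ (some ⟨y, hy⟩)).1
    have hμstar : ∀ k, μ ∈ C (ystar k) := fun k => hμC _ (hystarN k)
    have heq : ψ μ = ψ lstar := le_antisymm hμnone (hlstarMin μ hμstar)
    have hμeq : μ = lstar := by
      by_contra hne
      have hz : ∀ k, (1/2 : ℝ) • μ + (1/2 : ℝ) • lstar ∈ C (ystar k) := fun k =>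
        hCconvex (ystar k) (hμstar k) (hlstarFeas k) (by norm_num) (by norm_num) (by norm_num)
      have := hψstrict.2 (Set.mem_univ μ) (Set.mem_univ lstar) hne
        (by norm_num : (0:ℝ) < 1/2) (by norm_num : (0:ℝ) < 1/2) (by norm_num)
      have hlt : ψ ((1/2 : ℝ) • μ + (1/2 : ℝ) • lstar) < ψ lstar := by
        rw [smul_eq_mul, smul_eq_mul] at this
        linarith [heq]
      exact absurd (hlstarMin _ hz) (by linarith)
    exact hy0 (hμeq ▸ hμC y0 hy0N)
  have hHelly : ∃ I : Finset ι, #I ≤ M + 1 ∧ (⋂ i ∈ I, K i) = ∅ := by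
    by_contra hc
    push_neg at hc
    have hfr : Module.finrank ℝ (EuclideanSpace ℝ (Fin M)) = M := by simp
    have := Convex.helly_theorem_compact' (𝕜 := ℝ) hKconv hKcomp (fun I hI => by
      exact hc I (by rw [hfr] at hI; exact hI))
    rw [hempty] at this
    exact Set.not_nonempty_empty this
  obtain ⟨I, hIcard, hIempty⟩ := hHelly
  by_cases hnone : (none : ι) ∈ I
  case neg =>
    have : lbar ∈ ⋂ i ∈ I, K i := by
      refine Set.mem_iInter₂.mpr fun i hi => ?_
      match i with
      | none => exact absurd hi hnone
      | some y => exact ⟨hlbar y.1 y.2, by simpa [mem_closedBall_zero_iff] using hlbarR⟩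
    rw [hIempty] at this
    exact this
  case pos =>
    classical
    set k0 : Fin M := ⟨0, hM⟩ with hk0
    set y₀ : {y // y ∈ N} := ⟨ystar k0, hystarN k0⟩ with hy₀
    set J : Finset ι := I.erase none with hJ
    set s : Finset {y // y ∈ N} := J.image (fun o => o.getD y₀) with hs
    have hscard : #s ≤ M := by
      calc #s ≤ #J := Finset.card_image_le
        _ = #I - 1 := by rw [hJ, Finset.card_erase_of_mem hnone]
        _ ≤ M := by omega
    set e := s.toList with he
    have hlen : e.length ≤ M := by rw [he, Finset.length_toList]; exact hscard
    set ys : Fin M → EuclideanSpace ℝ (Fin n) := fun k =>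
      if h : (k : ℕ) < e.length then (e.get ⟨k, h⟩).1 else y₀.1 with hys
    have hysN : ∀ k, ys k ∈ N := by
      intro k
      rw [hys]
      dsimp only
      split
      · exact (e.get _).2
      · exact y₀.2
    have hcover : ∀ a ∈ s, ∃ k : Fin M, ys k = a.1 := by
      intro a ha
      have hae : a ∈ e := by rw [he]; exact Finset.mem_toList.mpr ha
      obtain ⟨idx, hidx⟩ := List.mem_iff_get.mp hae
      refine ⟨⟨idx, lt_of_lt_of_le idx.2 hlen⟩, ?_⟩
      rw [hys]
      dsimp only
      rw [dif_pos idx.2]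
      congr
    set P : Set (EuclideanSpace ℝ (Fin M)) := ⋂ k, C (ys k) with hP
    have hPclosed : IsClosed P := isClosed_iInter fun k => hCclosed (ys k)
    have hPne : P.Nonempty := ⟨lbar, Set.mem_iInter.mpr fun k => hlbar _ (hysN k)⟩
    obtain ⟨μ, hμP, hμmin⟩ := min_exists' ψ hψcont hψcoercive P hPclosed hPne
    have hμC : ∀ k, μ ∈ C (ys k) := Set.mem_iInter.mp hμP
    have hμle : ψ μ ≤ ψ lstar :=
      hmax ys hysN μ hμC (fun l hl => hμmin l (Set.mem_iInter.mpr hl))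
    have hμR : ‖μ‖ ≤ R := hsmall μ hμle
    have : μ ∈ ⋂ i ∈ I, K i := by
      refine Set.mem_iInter₂.mpr fun i hi => ?_
      match i with
      | none => exact ⟨hμle, by simpa [mem_closedBall_zero_iff] using hμR⟩
      | some a =>
        have haJ : (some a : ι) ∈ J := Finset.mem_erase.mpr ⟨by simp, hi⟩
        have has : a ∈ s := by
          rw [hs]
          exact Finset.mem_image.mpr ⟨some a, haJ, rfl⟩
        obtain ⟨k, hk⟩ := hcover a has
        refine ⟨?_, by simpa [mem_closedBall_zero_iff] using hμR⟩
        show μ ∈ C a.1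
        exact hk ▸ hμC k
    rw [hIempty] at this
    exact this

end AuxLemmas

private lemma lyap_aux' {n : ℕ} (hn : 1 ≤ n)
    (f : EuclideanSpace ℝ (Fin n) → EuclideanSpace ℝ (Fin n))
    (N : Set (EuclideanSpace ℝ (Fin n))) (hNnbd : N ∈ nhds (0 : EuclideanSpace ℝ (Fin n)))
    (V : EuclideanSpace ℝ (Fin n) → ℝ)
    (hVdiff : Differentiable ℝ V)
    (hV0 : V 0 = 0)
    (hVpos : ∀ y ∈ N, y ≠ 0 → 0 < V y)
    (hVdec : ∀ y ∈ N, fderiv ℝ V y (f y) ≤ 0) :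
    LyapunovStable n f := by
  intro ε hε
  obtain ⟨r, hr, hrN⟩ := Metric.mem_nhds_iff.mp hNnbd
  set ε' : ℝ := min (r / 2) (ε / 2) with hε'def
  have hε'pos : 0 < ε' := lt_min (by linarith) (by linarith)
  have hε'ε : ε' < ε := lt_of_le_of_lt (min_le_right _ _) (by linarith)
  have hballN : closedBall (0 : EuclideanSpace ℝ (Fin n)) ε' ⊆ N := by
    refine subset_trans ?_ hrN
    intro z hz
    rw [mem_closedBall_zero_iff] at hz
    rw [mem_ball_zero_iff]
    exact lt_of_le_of_lt hz (lt_of_le_of_lt (min_le_left _ _) (by linarith))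
  have : Nontrivial (EuclideanSpace ℝ (Fin n)) := by
    have hfr : Module.finrank ℝ (EuclideanSpace ℝ (Fin n)) = n := by simp
    exact Module.nontrivial_of_finrank_pos (R := ℝ)
      (by omega : 0 < Module.finrank ℝ (EuclideanSpace ℝ (Fin n)))
  have hsphne : (sphere (0 : EuclideanSpace ℝ (Fin n)) ε').Nonempty :=
    NormedSpace.sphere_nonempty.mpr hε'pos.le
  obtain ⟨ym, hym, hymmin⟩ := (isCompact_sphere (0 : EuclideanSpace ℝ (Fin n)) ε').exists_isMinOn
    hsphne hVdiff.continuous.continuousOn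
  set m : ℝ := V ym with hm
  have hymN : ym ∈ N := hballN (sphere_subset_closedBall hym)
  have hymnorm : ‖ym‖ = ε' := by rwa [mem_sphere_zero_iff_norm] at hym
  have hmpos : 0 < m := hVpos ym hymN (by intro h; rw [h] at hymnorm; simp at hymnorm; linarith)
  have hcont : ContinuousAt V 0 := hVdiff.continuous.continuousAt
  have hpre : V ⁻¹' Iio m ∈ nhds (0 : EuclideanSpace ℝ (Fin n)) :=
    hcont.preimage_mem_nhds (by rw [hV0]; exact Iio_mem_nhds hmpos)
  obtain ⟨δ₀, hδ₀, hδ₀sub⟩ := Metric.mem_nhds_iff.mp hpre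
  set δ : ℝ := min δ₀ ε' with hδdef
  have hδpos : 0 < δ := lt_min hδ₀ hε'pos
  refine ⟨δ, hδpos, fun x hx hx0 t ht => ?_⟩
  suffices h : ∀ t, 0 ≤ t → ‖x t‖ < ε' by exact lt_trans (h t ht) hε'ε
  by_contra hbad
  push_neg at hbad
  set bad : Set ℝ := {t | 0 ≤ t ∧ ε' ≤ ‖x t‖} with hbaddef
  have hbadne : bad.Nonempty := by
    obtain ⟨t1, ht1, ht1'⟩ := hbad
    exact ⟨t1, ht1, ht1'⟩
  have hbadbdd : BddBelow bad := ⟨0, fun t htm => htm.1⟩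
  have hbadclosed : IsClosed bad := by
    rw [← isSeqClosed_iff_isClosed]
    intro u tl hu hlim
    have h0 : 0 ≤ tl := le_of_tendsto_of_tendsto' tendsto_const_nhds hlim (fun k => (hu k).1)
    refine ⟨h0, ?_⟩
    have hta : Filter.Tendsto (fun k => ‖x (u k)‖) Filter.atTop (nhds ‖x tl‖) :=
      (((hx tl h0).continuousAt).tendsto.comp hlim).norm
    exact le_of_tendsto_of_tendsto' tendsto_const_nhds hta (fun k => (hu k).2)
  set T : ℝ := sInf bad with hT
  have hTbad : T ∈ bad := hbadclosed.csInf_mem hbadne hbadbdd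
  have hT0 : 0 ≤ T := hTbad.1
  have hx0ε' : ‖x 0‖ < ε' := lt_of_lt_of_le hx0 (min_le_right _ _)
  have hTpos : 0 < T := by
    rcases lt_or_eq_of_le hT0 with h | h
    · exact h
    · exfalso; rw [← h] at hTbad; exact absurd hTbad.2 (not_le.mpr hx0ε')
  have hlt : ∀ t, 0 ≤ t → t < T → ‖x t‖ < ε' := by
    intro t ht0 htT
    by_contra h
    push_neg at h
    exact absurd (csInf_le hbadbdd ⟨ht0, h⟩) (not_le.mpr htT)
  have hxT : ‖x T‖ = ε' := by
    refine le_antisymm ?_ hTbad.2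
    have hne : (nhdsWithin T (Ico 0 T)).NeBot := by
      rw [← mem_closure_iff_nhdsWithin_neBot, closure_Ico (ne_of_lt hTpos)]
      exact ⟨hT0, le_refl T⟩
    have htd : Filter.Tendsto (fun t => ‖x t‖) (nhdsWithin T (Ico 0 T)) (nhds ‖x T‖) :=
      (((hx T hT0).continuousAt).norm.tendsto).mono_left nhdsWithin_le_nhds
    refine le_of_tendsto htd ?_
    filter_upwards [self_mem_nhdsWithin] with t htIco
    exact (hlt t htIco.1 htIco.2).le
  have hxmem : ∀ t ∈ Icc (0:ℝ) T, x t ∈ N := by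
    intro t htm
    apply hballN
    rw [mem_closedBall_zero_iff]
    rcases lt_or_eq_of_le htm.2 with h | h
    · exact (hlt t htm.1 h).le
    · rw [h, hxT]
  have hg : ∀ t ∈ Icc (0:ℝ) T, HasDerivAt (fun u => V (x u)) (fderiv ℝ V (x t) (f (x t))) t :=
    fun t htm => (hVdiff (x t)).hasFDerivAt.comp_hasDerivAt t (hx t htm.1)
  have hanti : AntitoneOn (fun u => V (x u)) (Icc 0 T) := by
    apply antitoneOn_of_deriv_nonpos (convex_Icc 0 T)
    · exact fun t htm => ((hg t htm).continuousAt).continuousWithinAt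
    · intro t htm
      rw [interior_Icc] at htm
      exact ((hg t ⟨htm.1.le, htm.2.le⟩).differentiableAt).differentiableWithinAt
    · intro t htm
      rw [interior_Icc] at htm
      rw [(hg t ⟨htm.1.le, htm.2.le⟩).deriv]
      exact hVdec (x t) (hxmem t ⟨htm.1.le, htm.2.le⟩)
  have h1 : V (x T) ≤ V (x 0) := hanti ⟨le_refl 0, hT0⟩ ⟨hT0, le_refl T⟩ hT0
  have h2 : V (x 0) < m := by
    have : x 0 ∈ V ⁻¹' Iio m :=
      hδ₀sub (by rw [mem_ball_zero_iff]; exact lt_of_lt_of_le hx0 (min_le_left _ _))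
    exact this
  have h3 : m ≤ V (x T) := hymmin (by rwa [mem_sphere_zero_iff_norm])
  linarith

theorem stmt_0
    (n M : ℕ) (hn : 1 ≤ n) (hM : 1 ≤ M)
    (f : EuclideanSpace ℝ (Fin n) → EuclideanSpace ℝ (Fin n))
    (hfLip : ∃ K : NNReal, LipschitzWith K f) (hf0 : f 0 = 0)
    (N : Set (EuclideanSpace ℝ (Fin n))) (hNcpt : IsCompact N)
    (hNnbd : N ∈ nhds (0 : EuclideanSpace ℝ (Fin n)))
    (α β : ℝ → ℝ) (hα : IsClassK α) (hβ : IsClassK β)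
    (φ : Fin M → EuclideanSpace ℝ (Fin n) → ℝ)
    (hφ : ∀ i, ContDiff ℝ 1 (φ i)) (hφ0 : ∀ i, φ i 0 = 0)
    (ψ : EuclideanSpace ℝ (Fin M) → ℝ)
    (hψcont : Continuous ψ) (hψnonneg : ∀ l, 0 ≤ ψ l)
    (hψstrict : StrictConvexOn ℝ Set.univ ψ)
    (hψcoercive : ∀ C : ℝ, ∃ R : ℝ, ∀ l, R ≤ ‖l‖ → C ≤ ψ l)
    -- the feasible set of the semi-infinite program
    (F : Set (EuclideanSpace ℝ (Fin M)))
    (hF : F = {l | ∀ y ∈ N,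
      α ‖y‖ ≤ ∑ i, l i * φ i y ∧ (∑ i, l i * φ i y) ≤ β ‖y‖ ∧
      (∑ i, l i * fderiv ℝ (φ i) y (f y)) ≤ 0})
    (hFint : (interior F).Nonempty)
    -- the relaxed feasible sets
    (Fpt : (Fin M → EuclideanSpace ℝ (Fin n)) → Set (EuclideanSpace ℝ (Fin M)))
    (hFpt : ∀ ys, Fpt ys = {l | ∀ k : Fin M,
      α ‖ys k‖ ≤ ∑ i, l i * φ i (ys k) ∧ (∑ i, l i * φ i (ys k)) ≤ β ‖ys k‖ ∧
      (∑ i, l i * fderiv ℝ (φ i) (ys k) (f (ys k))) ≤ 0})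
    -- the relaxed value map Φ
    (Φ : (Fin M → EuclideanSpace ℝ (Fin n)) → ℝ)
    (hΦ : ∀ ys, Φ ys = sInf (ψ '' Fpt ys))
    -- (y₁*, …, y_M*) attains the supremum of Φ over N^M
    (ystar : Fin M → EuclideanSpace ℝ (Fin n)) (hystarN : ∀ k, ystar k ∈ N)
    (hystarmax : ∀ ys : Fin M → EuclideanSpace ℝ (Fin n), (∀ k, ys k ∈ N) → Φ ys ≤ Φ ystar)
    -- λ* minimizes ψ over F(y₁*, …, y_M*)
    (lstar : EuclideanSpace ℝ (Fin M))
    (hlstarFeas : lstar ∈ Fpt ystar)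
    (hlstarMin : ∀ l ∈ Fpt ystar, ψ lstar ≤ ψ l)
    -- the function V
    (V : EuclideanSpace ℝ (Fin n) → ℝ)
    (hV : ∀ z, V z = ∑ i, lstar i * φ i z) :
    V 0 = 0 ∧
    (∀ y ∈ N, y ≠ 0 → 0 < V y) ∧
    (∀ y ∈ N, fderiv ℝ V y (f y) ≤ 0) ∧
    LyapunovStable n f := by
  have hVfun : V = fun z => ∑ i, lstar i * φ i z := funext hV
  subst hVfun
  -- the pointwise constraint sets
  set C : EuclideanSpace ℝ (Fin n) → Set (EuclideanSpace ℝ (Fin M)) := fun y =>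
    {l | α ‖y‖ ≤ ∑ i, l i * φ i y ∧ (∑ i, l i * φ i y) ≤ β ‖y‖ ∧
      (∑ i, l i * fderiv ℝ (φ i) y (f y)) ≤ 0} with hC
  have hFptC : ∀ ys l, l ∈ Fpt ys ↔ ∀ k, l ∈ C (ys k) := by
    intro ys l
    rw [hFpt]
    rfl
  have hFC : ∀ l, l ∈ F ↔ ∀ y ∈ N, l ∈ C y := by
    intro l
    rw [hF]
    rfl
  have hCclosed : ∀ y, IsClosed (C y) := by
    intro y
    have h1 : IsClosed {l : EuclideanSpace ℝ (Fin M) | α ‖y‖ ≤ ∑ i, l i * φ i y} :=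
      isClosed_le continuous_const (lin_cont' (fun i => φ i y))
    have h2 : IsClosed {l : EuclideanSpace ℝ (Fin M) | (∑ i, l i * φ i y) ≤ β ‖y‖} :=
      isClosed_le (lin_cont' (fun i => φ i y)) continuous_const
    have h3 : IsClosed {l : EuclideanSpace ℝ (Fin M) |
        (∑ i, l i * fderiv ℝ (φ i) y (f y)) ≤ 0} :=
      isClosed_le (lin_cont' (fun i => fderiv ℝ (φ i) y (f y))) continuous_const
    exact (h1.inter (h2.inter h3))
  have hCconvex : ∀ y, Convex ℝ (C y) := by
    intro y
    have h1 := convex_halfSpace_ge (lin_map' (fun i => φ i y)) (α ‖y‖)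
    have h2 := convex_halfSpace_le (lin_map' (fun i => φ i y)) (β ‖y‖)
    have h3 := convex_halfSpace_le (lin_map' (fun i => fderiv ℝ (φ i) y (f y))) 0
    exact (h1.inter (h2.inter h3))
  -- a strictly feasible point
  obtain ⟨lbar, hlbarint⟩ := hFint
  have hlbarF : lbar ∈ F := interior_subset hlbarint
  have hlbar : ∀ y ∈ N, lbar ∈ C y := (hFC lbar).mp hlbarF
  -- the key feasibility of lstar
  have hmax : ∀ ys : Fin M → EuclideanSpace ℝ (Fin n), (∀ k, ys k ∈ N) →
      ∀ μ, (∀ k, μ ∈ C (ys k)) → (∀ l, (∀ k, l ∈ C (ys k)) → ψ μ ≤ ψ l) → ψ μ ≤ ψ lstar := by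
    intro ys hysN μ hμ hμmin
    have h1 : Φ ys = ψ μ := by
      rw [hΦ]
      exact csInf_image_min' ψ (Fpt ys) μ ((hFptC ys μ).mpr hμ)
        (fun l hl => hμmin l ((hFptC ys l).mp hl))
    have h2 : Φ ystar = ψ lstar := by
      rw [hΦ]
      exact csInf_image_min' ψ (Fpt ystar) lstar hlstarFeas hlstarMin
    rw [← h1, ← h2]
    exact hystarmax ys hysN
  have hfeas : ∀ y ∈ N, lstar ∈ C y :=
    key_feas' hM N C hCclosed hCconvex ψ hψcont hψstrict hψcoercive lbar hlbar
      ystar hystarN lstar (fun k => (hFptC ystar lstar).mp hlstarFeas k)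
      (fun l hl => hlstarMin l ((hFptC ystar l).mpr hl)) hmax
  -- derivative facts about V
  have hφdiff : ∀ i, Differentiable ℝ (φ i) := fun i => (hφ i).differentiable one_ne_zero
  have hVdiff : Differentiable ℝ (fun z => ∑ i, lstar i * φ i z) := by
    apply Differentiable.fun_sum
    intro i _
    exact (hφdiff i).const_mul (lstar i)
  have hVfderiv : ∀ y, fderiv ℝ (fun z => ∑ i, lstar i * φ i z) y (f y) =
      ∑ i, lstar i * fderiv ℝ (φ i) y (f y) := by
    intro y
    have hD : HasFDerivAt (fun z => ∑ i, lstar i * φ i z)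
        (∑ i, lstar i • fderiv ℝ (φ i) y) y := by
      apply HasFDerivAt.fun_sum
      intro i _
      exact ((hφdiff i) y).hasFDerivAt.const_mul (lstar i)
    rw [hD.fderiv]
    simp [ContinuousLinearMap.sum_apply]
  -- conclusions
  have hc1 : (fun z => ∑ i, lstar i * φ i z) 0 = 0 := by simp [hφ0]
  have hc2 : ∀ y ∈ N, y ≠ 0 → 0 < (fun z => ∑ i, lstar i * φ i z) y := by
    intro y hy hy0
    have h1 : α ‖y‖ ≤ ∑ i, lstar i * φ i y := (hfeas y hy).1
    have h2 : α 0 < α ‖y‖ :=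
      hα.2.1 (Set.self_mem_Ici) (Set.mem_Ici.mpr (norm_nonneg y)) (norm_pos_iff.mpr hy0)
    rw [hα.2.2.1] at h2
    exact lt_of_lt_of_le h2 h1
  have hc3 : ∀ y ∈ N, fderiv ℝ (fun z => ∑ i, lstar i * φ i z) y (f y) ≤ 0 := by
    intro y hy
    rw [hVfderiv y]
    exact (hfeas y hy).2.2
  exact ⟨hc1, hc2, hc3, lyap_aux' hn f N hNnbd _ hVdiff hc1 hc2 hc3⟩
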